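/- For p = 2 and for p = 3, there exists a Kochen–Specker coloring of the symmetric idempotents of the matrix ring M₃(𝔽_p) over the field 𝔽_p = ZMod p, and the partial ring M₃(𝔽_p)_sym of symmetric 3×3 matrices over 𝔽_p has a prime partial ideal. -/

import Mathlib

open Matrix

/-- A Kochen–Specker coloring of the symmetric idempotents of `M₃(R)`. -/
def IsSymKSColoring {R : Type*} [CommRing R]
    (c : {P : Matrix (Fin 3) (Fin 3) R // Pᵀ = P ∧ P * P = P} → Bool) : Prop :=
  ∀ (k : ℕ) (e : Fin k → {P : Matrix (Fin 3) (Fin 3) R // Pᵀ = P ∧ P * P = P}),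
    (∀ i j : Fin k, i ≠ j →
      (e i : Matrix (Fin 3) (Fin 3) R) * (e j : Matrix (Fin 3) (Fin 3) R) = 0) →
    ((∀ i j : Fin k, c (e i) = true → c (e j) = true → i = j) ∧
      ((∑ i, (e i : Matrix (Fin 3) (Fin 3) R)) = 1 → ∃! i : Fin k, c (e i) = true))

/-- A prime partial ideal of the partial ring `M₃(R)_sym` of symmetric matrices: a subset
of the set of symmetric matrices such that for every commutative subring `C` of `M₃(R)`
consisting of symmetric matrices, the corresponding subset of `C` is a prime ideal. -/
def IsSymPrimePartialIdeal {R : Type*} [CommRing R]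
    (p : Set (Matrix (Fin 3) (Fin 3) R)) : Prop :=
  (∀ A ∈ p, Aᵀ = A) ∧
  ∀ C : Subring (Matrix (Fin 3) (Fin 3) R), (∀ x y : C, x * y = y * x) →
    (∀ x : C, (x : Matrix (Fin 3) (Fin 3) R)ᵀ = (x : Matrix (Fin 3) (Fin 3) R)) →
    ∃ I : Ideal C, I.IsPrime ∧ ∀ x : C, x ∈ I ↔ (x : Matrix (Fin 3) (Fin 3) R) ∈ p


section Generic
variable {R : Type*} [CommRing R]

abbrev SymIdem (R : Type*) [CommRing R] :=
  {P : Matrix (Fin 3) (Fin 3) R // Pᵀ = P ∧ P * P = P}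

lemma orth_symm {A B : Matrix (Fin 3) (Fin 3) R} (hA : Aᵀ = A) (hB : Bᵀ = B)
    (h : A * B = 0) : B * A = 0 := by
  have h2 := congrArg Matrix.transpose h
  rwa [Matrix.transpose_mul, hA, hB, Matrix.transpose_zero] at h2

lemma one_symIdem : (1 : Matrix (Fin 3) (Fin 3) R)ᵀ = 1 ∧
    (1 : Matrix (Fin 3) (Fin 3) R) * 1 = 1 := ⟨Matrix.transpose_one, one_mul 1⟩

lemma zero_symIdem : (0 : Matrix (Fin 3) (Fin 3) R)ᵀ = 0 ∧
    (0 : Matrix (Fin 3) (Fin 3) R) * 0 = 0 := ⟨Matrix.transpose_zero, zero_mul 0⟩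

lemma master (c : SymIdem R → Bool)
    (h1 : c ⟨1, one_symIdem⟩ = true)
    (hF1 : ∀ P Q : SymIdem R, (P : Matrix (Fin 3) (Fin 3) R) * (Q : Matrix (Fin 3) (Fin 3) R) = 0 →
      c P = true → c Q = true → False)
    (hF3 : ∀ P Q : SymIdem R, (P : Matrix (Fin 3) (Fin 3) R) * (Q : Matrix (Fin 3) (Fin 3) R) = 0 →
      c P = false → c Q = false →
      ∀ h, c ⟨(P : Matrix (Fin 3) (Fin 3) R) + (Q : Matrix (Fin 3) (Fin 3) R), h⟩ = false) :
    IsSymKSColoring c := by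
  intro k e horth
  have atmost : ∀ i j : Fin k, c (e i) = true → c (e j) = true → i = j := by
    intro i j hi hj
    by_contra hij
    exact hF1 (e i) (e j) (horth i j hij) hi hj
  refine ⟨atmost, ?_⟩
  intro hsum
  have key : ∀ (n : ℕ) (f : Fin n → SymIdem R),
      (∀ i j, i ≠ j → (f i : Matrix (Fin 3) (Fin 3) R) * (f j : Matrix (Fin 3) (Fin 3) R) = 0) →
      ∀ Q : SymIdem R, (∀ i, (Q : Matrix (Fin 3) (Fin 3) R) * (f i : Matrix (Fin 3) (Fin 3) R) = 0) →
      (Q : Matrix (Fin 3) (Fin 3) R) + ∑ i, (f i : Matrix (Fin 3) (Fin 3) R) = 1 →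
      c Q = false → ∃ i, c (f i) = true := by
    intro n
    induction n with
    | zero =>
        intro f _ Q _ hsum' hQ
        have hQ1 : (Q : Matrix (Fin 3) (Fin 3) R) = 1 := by simpa using hsum'
        have : Q = ⟨1, one_symIdem⟩ := Subtype.ext hQ1
        rw [this, h1] at hQ
        simp at hQ
    | succ n ih =>
        intro f horthf Q hQorth hsum' hQfalse
        by_cases hlast : c (f (Fin.last n)) = true
        · exact ⟨Fin.last n, hlast⟩
        · have hlast' : c (f (Fin.last n)) = false := by simpa using hlast
          set E := f (Fin.last n) with hEdef
          have hQE : (Q : Matrix (Fin 3) (Fin 3) R) * E = 0 := hQorth _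
          have hEQ : (E : Matrix (Fin 3) (Fin 3) R) * Q = 0 := orth_symm Q.2.1 E.2.1 hQE
          have hsym : ((Q : Matrix (Fin 3) (Fin 3) R) + (E : Matrix (Fin 3) (Fin 3) R))ᵀ
              = (Q : Matrix (Fin 3) (Fin 3) R) + (E : Matrix (Fin 3) (Fin 3) R) := by
            rw [Matrix.transpose_add, Q.2.1, E.2.1]
          have hidem : ((Q : Matrix (Fin 3) (Fin 3) R) + (E : Matrix (Fin 3) (Fin 3) R))
              * ((Q : Matrix (Fin 3) (Fin 3) R) + (E : Matrix (Fin 3) (Fin 3) R))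
              = (Q : Matrix (Fin 3) (Fin 3) R) + (E : Matrix (Fin 3) (Fin 3) R) := by
            rw [add_mul, mul_add, mul_add, Q.2.2, E.2.2, hQE, hEQ, add_zero, zero_add]
          have hQ'false := hF3 Q E hQE hQfalse hlast' ⟨hsym, hidem⟩
          obtain ⟨i, hi⟩ := ih (fun i => f i.castSucc)
            (fun i j hij => horthf _ _ (fun h => hij (Fin.castSucc_injective _ h)))
            ⟨(Q : Matrix (Fin 3) (Fin 3) R) + (E : Matrix (Fin 3) (Fin 3) R), hsym, hidem⟩
            (fun i => by
              show ((Q : Matrix (Fin 3) (Fin 3) R) + (E : Matrix (Fin 3) (Fin 3) R)) * _ = 0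
              rw [add_mul, hQorth _, zero_add]
              exact horthf _ _ (Fin.castSucc_lt_last i).ne')
            (by
              show (Q : Matrix (Fin 3) (Fin 3) R) + (E : Matrix (Fin 3) (Fin 3) R) + _ = 1
              rw [Fin.sum_univ_castSucc] at hsum'
              rw [← hsum']
              abel)
            hQ'false
          exact ⟨i.castSucc, hi⟩
  have hzero : c ⟨0, zero_symIdem⟩ = false := by
    by_contra hcz
    have hcz' : c ⟨0, zero_symIdem⟩ = true := by simpa using hcz
    exact hF1 ⟨0, zero_symIdem⟩ ⟨0, zero_symIdem⟩ (by simp) hcz' hcz'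
  obtain ⟨i, hi⟩ := key k e horth ⟨0, zero_symIdem⟩ (fun i => by simp) (by simpa using hsum) hzero
  exact ⟨i, hi, fun j hj => atmost j i hj hi⟩

end Generic

section Derived
variable {R : Type*} [CommRing R] {c : SymIdem R → Bool}

lemma D1 (hc : IsSymKSColoring c) (h) : c ⟨1, h⟩ = true := by
  obtain ⟨i, hi, -⟩ := (hc 1 (fun _ => ⟨1, h⟩)
    (fun i j hij => absurd (Subsingleton.elim i j) hij)).2 (by simp)
  exact hi

lemma D2 (hc : IsSymKSColoring c) {P Q : SymIdem R}
    (hPQ : (P : Matrix (Fin 3) (Fin 3) R) * (Q : Matrix (Fin 3) (Fin 3) R) = 0)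
    (hP : c P = true) (hQ : c Q = true) : False := by
  have hQP := orth_symm P.2.1 Q.2.1 hPQ
  have horth : ∀ i j : Fin 2, i ≠ j →
      ((![P, Q] i : SymIdem R) : Matrix (Fin 3) (Fin 3) R)
        * ((![P, Q] j : SymIdem R) : Matrix (Fin 3) (Fin 3) R) = 0 := by
    intro i j hij
    fin_cases i <;> fin_cases j <;>
      first
        | exact absurd rfl hij
        | simpa using hPQ
        | simpa using hQP
  have h01 := (hc 2 ![P, Q] horth).1 0 1 (by simpa using hP) (by simpa using hQ)
  simp at h01

lemma KS2_exists (hc : IsSymKSColoring c) (P Q : SymIdem R)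
    (h1 : (P : Matrix (Fin 3) (Fin 3) R) * (Q : Matrix (Fin 3) (Fin 3) R) = 0)
    (hsum : (P : Matrix (Fin 3) (Fin 3) R) + (Q : Matrix (Fin 3) (Fin 3) R) = 1) :
    c P = true ∨ c Q = true := by
  have h2 := orth_symm P.2.1 Q.2.1 h1
  have horth : ∀ i j : Fin 2, i ≠ j →
      ((![P, Q] i : SymIdem R) : Matrix (Fin 3) (Fin 3) R)
        * ((![P, Q] j : SymIdem R) : Matrix (Fin 3) (Fin 3) R) = 0 := by
    intro i j hij
    fin_cases i <;> fin_cases j <;>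
      first
        | exact absurd rfl hij
        | simpa using h1
        | simpa using h2
  obtain ⟨i, hi, -⟩ := (hc 2 ![P, Q] horth).2 (by simpa [Fin.sum_univ_two] using hsum)
  fin_cases i
  · exact Or.inl hi
  · exact Or.inr hi

lemma KS3_exists (hc : IsSymKSColoring c) (P Q S : SymIdem R)
    (h12 : (P : Matrix (Fin 3) (Fin 3) R) * (Q : Matrix (Fin 3) (Fin 3) R) = 0)
    (h13 : (P : Matrix (Fin 3) (Fin 3) R) * (S : Matrix (Fin 3) (Fin 3) R) = 0)
    (h23 : (Q : Matrix (Fin 3) (Fin 3) R) * (S : Matrix (Fin 3) (Fin 3) R) = 0)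
    (hsum : (P : Matrix (Fin 3) (Fin 3) R) + (Q : Matrix (Fin 3) (Fin 3) R)
      + (S : Matrix (Fin 3) (Fin 3) R) = 1) :
    c P = true ∨ c Q = true ∨ c S = true := by
  have h21 := orth_symm P.2.1 Q.2.1 h12
  have h31 := orth_symm P.2.1 S.2.1 h13
  have h32 := orth_symm Q.2.1 S.2.1 h23
  have horth : ∀ i j : Fin 3, i ≠ j →
      ((![P, Q, S] i : SymIdem R) : Matrix (Fin 3) (Fin 3) R)
        * ((![P, Q, S] j : SymIdem R) : Matrix (Fin 3) (Fin 3) R) = 0 := by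
    intro i j hij
    fin_cases i <;> fin_cases j <;>
      first
        | exact absurd rfl hij
        | simpa using h12
        | simpa using h13
        | simpa using h23
        | simpa using h21
        | simpa using h31
        | simpa using h32
  obtain ⟨i, hi, -⟩ := (hc 3 ![P, Q, S] horth).2 (by simpa [Fin.sum_univ_three] using hsum)
  fin_cases i
  · exact Or.inl hi
  · exact Or.inr (Or.inl hi)
  · exact Or.inr (Or.inr hi)

lemma D3 (hc : IsSymKSColoring c) {P : SymIdem R} (hP : c P = false) (h) :
    c ⟨1 - (P : Matrix (Fin 3) (Fin 3) R), h⟩ = true := by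
  have ho : (P : Matrix (Fin 3) (Fin 3) R) * (1 - (P : Matrix (Fin 3) (Fin 3) R)) = 0 := by
    rw [mul_sub, mul_one, P.2.2, sub_self]
  rcases KS2_exists hc P ⟨1 - (P : Matrix (Fin 3) (Fin 3) R), h⟩ ho (by simp) with hcP | hcQ
  · rw [hP] at hcP; simp at hcP
  · exact hcQ

lemma prodSymIdem (P Q : SymIdem R)
    (hco : (P : Matrix (Fin 3) (Fin 3) R) * (Q : Matrix (Fin 3) (Fin 3) R)
      = (Q : Matrix (Fin 3) (Fin 3) R) * (P : Matrix (Fin 3) (Fin 3) R)) :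
    ((P : Matrix (Fin 3) (Fin 3) R) * (Q : Matrix (Fin 3) (Fin 3) R))ᵀ
      = (P : Matrix (Fin 3) (Fin 3) R) * (Q : Matrix (Fin 3) (Fin 3) R) ∧
    ((P : Matrix (Fin 3) (Fin 3) R) * (Q : Matrix (Fin 3) (Fin 3) R))
      * ((P : Matrix (Fin 3) (Fin 3) R) * (Q : Matrix (Fin 3) (Fin 3) R))
      = (P : Matrix (Fin 3) (Fin 3) R) * (Q : Matrix (Fin 3) (Fin 3) R) := by
  have r1 : ∀ x, (P : Matrix (Fin 3) (Fin 3) R) * ((P : Matrix (Fin 3) (Fin 3) R) * x)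
      = (P : Matrix (Fin 3) (Fin 3) R) * x := fun x => by rw [← mul_assoc, P.2.2]
  have r3 : ∀ x, (Q : Matrix (Fin 3) (Fin 3) R) * ((P : Matrix (Fin 3) (Fin 3) R) * x)
      = (P : Matrix (Fin 3) (Fin 3) R) * ((Q : Matrix (Fin 3) (Fin 3) R) * x) := fun x => by
    rw [← mul_assoc, ← hco, mul_assoc]
  constructor
  · rw [Matrix.transpose_mul, Q.2.1, P.2.1, ← hco]
  · simp only [mul_assoc]
    simp only [r1, r3, Q.2.2]

lemma D4 (hc : IsSymKSColoring c) {P Q : SymIdem R}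
    (hco : (P : Matrix (Fin 3) (Fin 3) R) * (Q : Matrix (Fin 3) (Fin 3) R)
      = (Q : Matrix (Fin 3) (Fin 3) R) * (P : Matrix (Fin 3) (Fin 3) R))
    (hP : c P = true) (hQ : c Q = true) (h) :
    c ⟨(P : Matrix (Fin 3) (Fin 3) R) * (Q : Matrix (Fin 3) (Fin 3) R), h⟩ = true := by
  set a : Matrix (Fin 3) (Fin 3) R := (P : Matrix (Fin 3) (Fin 3) R) with hadef
  set b : Matrix (Fin 3) (Fin 3) R := (Q : Matrix (Fin 3) (Fin 3) R) with hbdef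
  have hat : aᵀ = a := P.2.1
  have hbt : bᵀ = b := Q.2.1
  have ha : a * a = a := P.2.2
  have hb : b * b = b := Q.2.2
  have hba : b * a = a * b := hco.symm
  have r1 : ∀ x, a * (a * x) = a * x := fun x => by rw [← mul_assoc, ha]
  have r2 : ∀ x, b * (b * x) = b * x := fun x => by rw [← mul_assoc, hb]
  have r3 : ∀ x, b * (a * x) = a * (b * x) := fun x => by rw [← mul_assoc, hba, mul_assoc]
  have hu_si : (a - a * b)ᵀ = a - a * b ∧ (a - a*b) * (a - a*b) = a - a*b := by
    refine ⟨by rw [Matrix.transpose_sub, hat, h.1], ?_⟩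
    simp only [mul_sub, sub_mul, mul_assoc]
    simp only [r1, r2, r3, ha, hb, hba]
    abel
  have hv_si : (b - a * b)ᵀ = b - a * b ∧ (b - a*b) * (b - a*b) = b - a*b := by
    refine ⟨by rw [Matrix.transpose_sub, hbt, h.1], ?_⟩
    simp only [mul_sub, sub_mul, mul_assoc]
    simp only [r1, r2, r3, ha, hb, hba]
    abel
  have hna_si : (1 - a)ᵀ = 1 - a ∧ (1 - a) * (1 - a) = 1 - a := by
    refine ⟨by rw [Matrix.transpose_sub, Matrix.transpose_one, hat], ?_⟩
    rw [sub_mul, one_mul, mul_sub, mul_one, ha]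
    abel
  have hnb_si : (1 - b)ᵀ = 1 - b ∧ (1 - b) * (1 - b) = 1 - b := by
    refine ⟨by rw [Matrix.transpose_sub, Matrix.transpose_one, hbt], ?_⟩
    rw [sub_mul, one_mul, mul_sub, mul_one, hb]
    abel
  have hna_false : c ⟨1 - a, hna_si⟩ = false := by
    by_contra hcna
    exact D2 hc (P := P) (Q := ⟨1 - a, hna_si⟩)
      (show a * (1 - a) = 0 by rw [mul_sub, mul_one, ha, sub_self]) hP (by simpa using hcna)
  have hnb_false : c ⟨1 - b, hnb_si⟩ = false := by
    by_contra hcnb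
    exact D2 hc (P := Q) (Q := ⟨1 - b, hnb_si⟩)
      (show b * (1 - b) = 0 by rw [mul_sub, mul_one, hb, sub_self]) hQ (by simpa using hcnb)
  by_contra hcab
  have hab_false : c ⟨a * b, h⟩ = false := by simpa using hcab
  have o1 : (a * b) * (a - a * b) = 0 := by
    simp only [mul_sub, mul_assoc]
    simp only [r1, r2, r3, ha, hb, hba]
    abel
  have o2 : (a * b) * (1 - a) = 0 := by
    simp only [mul_sub, mul_one, mul_assoc]
    simp only [r1, r2, r3, ha, hb, hba]
    abel
  have o3 : (a - a * b) * (1 - a) = 0 := by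
    simp only [mul_sub, sub_mul, mul_one, one_mul, mul_assoc]
    simp only [r1, r2, r3, ha, hb, hba]
    abel
  have o1' : (a * b) * (b - a * b) = 0 := by
    simp only [mul_sub, mul_assoc]
    simp only [r1, r2, r3, ha, hb, hba]
    abel
  have o2' : (a * b) * (1 - b) = 0 := by
    simp only [mul_sub, mul_one, mul_assoc]
    simp only [r1, r2, r3, ha, hb, hba]
    abel
  have o3' : (b - a * b) * (1 - b) = 0 := by
    simp only [mul_sub, sub_mul, mul_one, one_mul, mul_assoc]
    simp only [r1, r2, r3, ha, hb, hba]
    abel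
  have hu_true : c ⟨a - a * b, hu_si⟩ = true := by
    rcases KS3_exists hc ⟨a * b, h⟩ ⟨a - a * b, hu_si⟩ ⟨1 - a, hna_si⟩ o1 o2 o3
        (by show a * b + (a - a * b) + (1 - a) = 1; abel) with h' | h' | h'
    · rw [hab_false] at h'; simp at h'
    · exact h'
    · rw [hna_false] at h'; simp at h'
  have hv_true : c ⟨b - a * b, hv_si⟩ = true := by
    rcases KS3_exists hc ⟨a * b, h⟩ ⟨b - a * b, hv_si⟩ ⟨1 - b, hnb_si⟩ o1' o2' o3'
        (by show a * b + (b - a * b) + (1 - b) = 1; abel) with h' | h' | h'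
    · rw [hab_false] at h'; simp at h'
    · exact h'
    · rw [hnb_false] at h'; simp at h'
  have huv : (a - a * b) * (b - a * b) = 0 := by
    simp only [mul_sub, sub_mul, mul_assoc]
    simp only [r1, r2, r3, ha, hb, hba]
    abel
  exact D2 hc (P := ⟨a - a * b, hu_si⟩) (Q := ⟨b - a * b, hv_si⟩) huv hu_true hv_true

end Derived

section PowStab

lemma pow_stab_aux {M : Type*} [Monoid M] (x : M) {a d : ℕ} (hd : 0 < d)
    (h : x ^ a = x ^ (a + d)) : ∀ m, a ≤ m → d ∣ m → x ^ (2 * m) = x ^ m := by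
  have step : ∀ m, a ≤ m → x ^ (m + d) = x ^ m := by
    intro m hm
    obtain ⟨t, rfl⟩ := Nat.exists_eq_add_of_le hm
    rw [show a + t + d = (a + d) + t by omega, pow_add, ← h, ← pow_add]
  have iter : ∀ k m, a ≤ m → x ^ (m + k * d) = x ^ m := by
    intro k
    induction k with
    | zero => intro m hm; simp
    | succ k ih =>
        intro m hm
        rw [show m + (k + 1) * d = (m + k * d) + d by ring, step _ (le_trans hm (Nat.le_add_right _ _)),
          ih m hm]
  intro m hm hdvd
  obtain ⟨k, rfl⟩ := hdvd
  rw [show 2 * (d * k) = d * k + k * d by ring]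
  exact iter k (d * k) hm

lemma exists_pow_stab (M : Type*) [Monoid M] [Finite M] :
    ∃ N : ℕ, 0 < N ∧ ∀ x : M, x ^ (2 * N) = x ^ N := by
  cases nonempty_fintype M
  set n := Fintype.card M with hn
  refine ⟨Nat.factorial n, Nat.factorial_pos n, fun x => ?_⟩
  obtain ⟨i, j, hij, hpow⟩ := Fintype.exists_ne_map_eq_of_card_lt
    (fun i : Fin (n + 1) => x ^ (i : ℕ)) (by simp [hn])
  have main : ∀ u v : Fin (n + 1), (u : ℕ) < (v : ℕ) → x ^ (u : ℕ) = x ^ (v : ℕ) →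
      x ^ (2 * Nat.factorial n) = x ^ (Nat.factorial n) := by
    intro u v huv he
    have hd : 0 < (v : ℕ) - (u : ℕ) := Nat.sub_pos_of_lt huv
    have h' : x ^ (u : ℕ) = x ^ ((u : ℕ) + ((v : ℕ) - (u : ℕ))) := by
      rw [Nat.add_sub_cancel' huv.le]; exact he
    refine pow_stab_aux x hd h' (Nat.factorial n) ?_ ?_
    · exact le_trans (Nat.le_of_lt_succ u.isLt) (Nat.self_le_factorial n)
    · exact Nat.dvd_factorial hd (by omega)
  rcases Ne.lt_or_gt (fun h : (i : ℕ) = (j : ℕ) => hij (Fin.ext h)) with h | h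
  · exact main i j h hpow
  · exact main j i h hpow.symm

lemma idem_pow {M : Type*} [Monoid M] {a : M} (h : a * a = a) :
    ∀ n, 0 < n → a ^ n = a := by
  intro n hn
  induction n with
  | zero => omega
  | succ n ih =>
      rcases Nat.eq_zero_or_pos n with rfl | hn'
      · simp
      · rw [pow_succ, ih hn', h]

lemma nilp_pow {M : Type*} [MonoidWithZero M] {A : M} {N : ℕ} (hN : 0 < N)
    (hst : A ^ (2 * N) = A ^ N) (h : ∃ m, A ^ m = 0) : A ^ N = 0 := by
  obtain ⟨m, hm⟩ := h
  have hidem : A ^ N * A ^ N = A ^ N := by rw [← pow_add, ← two_mul, hst]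
  rcases Nat.eq_zero_or_pos m with rfl | hm'
  · -- 1 = 0, trivial
    have h10 : (1 : M) = 0 := by simpa using hm
    calc A ^ N = A ^ N * 1 := (mul_one _).symm
      _ = A ^ N * 0 := by rw [h10]
      _ = 0 := mul_zero _
  · have h1 : A ^ N = (A ^ N) ^ m := (idem_pow hidem m hm').symm
    have h2 : (A ^ N) ^ m = A ^ (N * m) := (pow_mul A N m).symm
    have h3 : A ^ (N * m) = A ^ (m + (N * m - m)) := by
      congr 1
      have : m ≤ N * m := Nat.le_mul_of_pos_left m hN
      omega
    rw [h1, h2, h3, pow_add, hm, zero_mul]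

end PowStab

section Prime
variable {R : Type*} [CommRing R] [Fintype R] [DecidableEq R]

lemma prime_of_coloring (c : SymIdem R → Bool) (hc : IsSymKSColoring c) :
    ∃ q : Set (Matrix (Fin 3) (Fin 3) R), IsSymPrimePartialIdeal q := by
  obtain ⟨N, hN, hstab⟩ := exists_pow_stab (Matrix (Fin 3) (Fin 3) R)
  have symIdemPow : ∀ (A : Matrix (Fin 3) (Fin 3) R), Aᵀ = A →
      ((A ^ N)ᵀ = A ^ N ∧ (A ^ N) * (A ^ N) = A ^ N) := by
    intro A hA
    refine ⟨by rw [Matrix.transpose_pow, hA], ?_⟩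
    rw [← pow_add, ← two_mul, hstab]
  refine ⟨{A | ∃ h : Aᵀ = A, c ⟨A ^ N, symIdemPow A h⟩ = false}, fun A hA => hA.1, ?_⟩
  intro C hcomm hsym
  have commC : ∀ x y : C, (x : Matrix (Fin 3) (Fin 3) R) * (y : Matrix (Fin 3) (Fin 3) R)
      = (y : Matrix (Fin 3) (Fin 3) R) * (x : Matrix (Fin 3) (Fin 3) R) := by
    intro x y
    have := congrArg (Subtype.val) (hcomm x y)
    simpa using this
  -- ε
  let ε : C → SymIdem R := fun x => ⟨(x : Matrix (Fin 3) (Fin 3) R) ^ N, symIdemPow _ (hsym x)⟩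
  have εval : ∀ x : C, ((ε x : SymIdem R) : Matrix (Fin 3) (Fin 3) R)
      = (x : Matrix (Fin 3) (Fin 3) R) ^ N := fun x => rfl
  have εcomm : ∀ x y : C, ((ε x : SymIdem R) : Matrix (Fin 3) (Fin 3) R)
      * ((ε y : SymIdem R) : Matrix (Fin 3) (Fin 3) R)
      = ((ε y : SymIdem R) : Matrix (Fin 3) (Fin 3) R)
        * ((ε x : SymIdem R) : Matrix (Fin 3) (Fin 3) R) := by
    intro x y
    exact ((Commute.pow_pow (commC x y) N N))
  have εmul : ∀ x y : C, ε (x * y) = ⟨((ε x : SymIdem R) : Matrix (Fin 3) (Fin 3) R)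
      * ((ε y : SymIdem R) : Matrix (Fin 3) (Fin 3) R), prodSymIdem (ε x) (ε y) (εcomm x y)⟩ := by
    intro x y
    apply Subtype.ext
    show ((x * y : C) : Matrix (Fin 3) (Fin 3) R) ^ N = _
    rw [Subring.coe_mul, Commute.mul_pow (commC x y)]
  -- key: products with a false factor are false
  have mul_false : ∀ x y : C, c (ε y) = false → c (ε (x * y)) = false := by
    intro x y hy
    by_contra hcxy
    have htrue : c (ε (x * y)) = true := by simpa using hcxy
    -- 1 - ε y is true
    have hcompl : ((ε y : SymIdem R) : Matrix (Fin 3) (Fin 3) R)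
        * (1 - ((ε y : SymIdem R) : Matrix (Fin 3) (Fin 3) R)) = 0 := by
      rw [mul_sub, mul_one, (ε y).2.2, sub_self]
    have hnySI : (1 - ((ε y : SymIdem R) : Matrix (Fin 3) (Fin 3) R))ᵀ
        = 1 - ((ε y : SymIdem R) : Matrix (Fin 3) (Fin 3) R) ∧
        (1 - ((ε y : SymIdem R) : Matrix (Fin 3) (Fin 3) R))
          * (1 - ((ε y : SymIdem R) : Matrix (Fin 3) (Fin 3) R))
          = 1 - ((ε y : SymIdem R) : Matrix (Fin 3) (Fin 3) R) := by
      refine ⟨by rw [Matrix.transpose_sub, Matrix.transpose_one, (ε y).2.1], ?_⟩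
      rw [sub_mul, one_mul, mul_sub, mul_one, (ε y).2.2]
      abel
    have hny_true : c ⟨1 - ((ε y : SymIdem R) : Matrix (Fin 3) (Fin 3) R), hnySI⟩ = true :=
      D3 hc hy _
    -- ε(xy) * (1 - εy) = 0
    have horth : ((ε (x * y) : SymIdem R) : Matrix (Fin 3) (Fin 3) R)
        * (1 - ((ε y : SymIdem R) : Matrix (Fin 3) (Fin 3) R)) = 0 := by
      rw [εmul x y]
      show (((ε x : SymIdem R) : Matrix (Fin 3) (Fin 3) R)
        * ((ε y : SymIdem R) : Matrix (Fin 3) (Fin 3) R)) * _ = 0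
      rw [mul_assoc, hcompl, mul_zero]
    exact D2 hc horth htrue hny_true
  -- the ideal
  refine ⟨{ carrier := {x : C | c (ε x) = false},
            add_mem' := ?_, zero_mem' := ?_, smul_mem' := ?_ }, ⟨?_, ?_⟩, ?_⟩
  · -- add_mem'
    intro x y hx hy
    simp only [Set.mem_setOf_eq] at hx hy ⊢
    set a : Matrix (Fin 3) (Fin 3) R := (x : Matrix (Fin 3) (Fin 3) R) with hadef
    set b : Matrix (Fin 3) (Fin 3) R := (y : Matrix (Fin 3) (Fin 3) R) with hbdef
    have hab : a * b = b * a := commC x y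
    set E : Matrix (Fin 3) (Fin 3) R := a ^ N with hEdef
    set F : Matrix (Fin 3) (Fin 3) R := b ^ N with hFdef
    have hE2 : E * E = E := (ε x).2.2
    have hF2 : F * F = F := (ε y).2.2
    have hEt : Eᵀ = E := (ε x).2.1
    have hFt : Fᵀ = F := (ε y).2.1
    have hEF : Commute E F := Commute.pow_pow hab N N
    have hcEF : (1 - E) * (1 - F) = (1 - F) * (1 - E) := by
      have h1 : (1 - E) * (1 - F) = 1 - E - F + E * F := by noncomm_ring
      have h2 : (1 - F) * (1 - E) = 1 - F - E + F * E := by noncomm_ring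
      rw [h1, h2, hEF.eq]
      abel
    have hnE_si : (1 - E)ᵀ = 1 - E ∧ (1 - E) * (1 - E) = 1 - E := by
      refine ⟨by rw [Matrix.transpose_sub, Matrix.transpose_one, hEt], ?_⟩
      rw [sub_mul, one_mul, mul_sub, mul_one, hE2]
      abel
    have hnF_si : (1 - F)ᵀ = 1 - F ∧ (1 - F) * (1 - F) = 1 - F := by
      refine ⟨by rw [Matrix.transpose_sub, Matrix.transpose_one, hFt], ?_⟩
      rw [sub_mul, one_mul, mul_sub, mul_one, hF2]
      abel
    have h1E : c ⟨1 - E, hnE_si⟩ = true := D3 hc (P := ε x) hx hnE_si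
    have h1F : c ⟨1 - F, hnF_si⟩ = true := D3 hc (P := ε y) hy hnF_si
    have hHsi := prodSymIdem (⟨1 - E, hnE_si⟩ : SymIdem R) (⟨1 - F, hnF_si⟩ : SymIdem R) hcEF
    have hH_true : c ⟨(1 - E) * (1 - F), hHsi⟩ = true :=
      D4 hc (P := ⟨1 - E, hnE_si⟩) (Q := ⟨1 - F, hnF_si⟩) hcEF h1E h1F hHsi
    set H : Matrix (Fin 3) (Fin 3) R := (1 - E) * (1 - F) with hHdef
    have hH2 : H * H = H := hHsi.2
    have hE1E : E * (1 - E) = 0 := by rw [mul_sub, mul_one, hE2, sub_self]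
    have hF1F : F * (1 - F) = 0 := by rw [mul_sub, mul_one, hF2, sub_self]
    have hEH : E * H = 0 := by
      rw [hHdef, ← mul_assoc, hE1E, zero_mul]
    have hFH : F * H = 0 := by
      have hcomm1 : F * (1 - E) = (1 - E) * F := by
        rw [mul_sub, sub_mul, mul_one, one_mul, ← hEF.eq]
      rw [hHdef, ← mul_assoc, hcomm1, mul_assoc, hF1F, mul_zero]
    have hab' : Commute a b := hab
    have hcaE : Commute a E := (Commute.refl a).pow_right N
    have hcaF : Commute a F := hab'.pow_right N
    have hcbE : Commute b E := (hab'.symm).pow_right N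
    have hcbF : Commute b F := (Commute.refl b).pow_right N
    have hcaH : Commute a H :=
      ((Commute.one_right a).sub_right hcaE).mul_right ((Commute.one_right a).sub_right hcaF)
    have hcbH : Commute b H :=
      ((Commute.one_right b).sub_right hcbE).mul_right ((Commute.one_right b).sub_right hcbF)
    have haHN : (a * H) ^ N = 0 := by
      rw [hcaH.mul_pow, idem_pow hH2 N hN, ← hEdef, hEH]
    have hbHN : (b * H) ^ N = 0 := by
      rw [hcbH.mul_pow, idem_pow hH2 N hN, ← hFdef, hFH]
    have hcab2 : Commute (a * H) (b * H) :=
      (hab'.mul_right hcaH).mul_left ((hcbH.symm).mul_right (Commute.refl H))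
    have hzH : IsNilpotent ((a + b) * H) := by
      rw [add_mul]
      exact hcab2.isNilpotent_add ⟨N, haHN⟩ ⟨N, hbHN⟩
    have hczH : Commute (a + b) H := hcaH.add_left hcbH
    have hGH : (a + b) ^ N * H = 0 := by
      calc (a + b) ^ N * H = (a + b) ^ N * H ^ N := by rw [idem_pow hH2 N hN]
        _ = ((a + b) * H) ^ N := (hczH.mul_pow N).symm
        _ = 0 := nilp_pow hN (hstab _) hzH
    by_contra hcz
    have hztrue : c (ε (x + y)) = true := by simpa using hcz
    have horthz : ((ε (x + y) : SymIdem R) : Matrix (Fin 3) (Fin 3) R) * H = 0 := by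
      have hcoe : ((x + y : C) : Matrix (Fin 3) (Fin 3) R) = a + b := by
        push_cast
        rfl
      show ((x + y : C) : Matrix (Fin 3) (Fin 3) R) ^ N * H = 0
      rw [hcoe]
      exact hGH
    exact D2 hc (P := ε (x + y)) (Q := ⟨H, hHsi⟩) horthz hztrue hH_true
  · -- zero_mem'
    have h0 : ε (0 : C) = ⟨(0 : Matrix (Fin 3) (Fin 3) R), zero_symIdem⟩ := by
      apply Subtype.ext
      show ((0 : C) : Matrix (Fin 3) (Fin 3) R) ^ N = 0
      rw [ZeroMemClass.coe_zero, zero_pow hN.ne']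
    show c (ε 0) = false
    rw [h0]
    by_contra hz
    exact D2 hc (P := (⟨0, zero_symIdem⟩ : SymIdem R)) (Q := ⟨0, zero_symIdem⟩)
      (by simp) (by simpa using hz) (by simpa using hz)
  · -- smul_mem'
    intro r x hx
    show c (ε (r * x)) = false
    exact mul_false r x hx
  · -- ne_top
    intro htop
    have h1mem : (1 : C) ∈ _ := (Ideal.eq_top_iff_one _).mp htop
    have h1 : c (ε 1) = false := h1mem
    have hε1 : ε (1 : C) = ⟨1, one_symIdem⟩ := by
      apply Subtype.ext
      show ((1 : C) : Matrix (Fin 3) (Fin 3) R) ^ N = 1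
      rw [OneMemClass.coe_one, one_pow]
    rw [hε1, D1 hc] at h1
    simp at h1
  · -- mem_or_mem
    intro x y hxy
    by_contra hcon
    push_neg at hcon
    have hxt : c (ε x) = true := by
      have : ¬ c (ε x) = false := hcon.1
      simpa using this
    have hyt : c (ε y) = true := by
      have : ¬ c (ε y) = false := hcon.2
      simpa using this
    have hprod := D4 hc (P := ε x) (Q := ε y) (εcomm x y) hxt hyt (prodSymIdem _ _ (εcomm x y))
    have hxyt : c (ε (x * y)) = true := by
      rw [εmul x y]
      exact hprod
    have hxyf : c (ε (x * y)) = false := hxy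
    rw [hxyt] at hxyf
    simp at hxyf
  · -- membership characterization
    intro x
    constructor
    · intro hmem
      exact ⟨hsym x, hmem⟩
    · rintro ⟨h, hfalse⟩
      exact hfalse

end Prime

section Concrete

def L2 : List (Matrix (Fin 3) (Fin 3) (ZMod 2)) :=
  [!![0, 0, 0; 0, 0, 0; 0, 0, 0],
   !![0, 0, 0; 0, 0, 0; 0, 0, 1],
   !![0, 0, 0; 0, 1, 0; 0, 0, 0],
   !![0, 0, 0; 0, 1, 0; 0, 0, 1],
   !![0, 1, 1; 1, 0, 1; 1, 1, 0],
   !![1, 0, 0; 0, 0, 0; 0, 0, 0],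
   !![1, 0, 0; 0, 0, 0; 0, 0, 1],
   !![1, 0, 0; 0, 1, 0; 0, 0, 0],
   !![1, 0, 0; 0, 1, 0; 0, 0, 1],
   !![1, 1, 1; 1, 1, 1; 1, 1, 1]]

def T2 : List (Matrix (Fin 3) (Fin 3) (ZMod 2)) :=
  [!![1, 0, 0; 0, 0, 0; 0, 0, 0],
   !![1, 0, 0; 0, 0, 0; 0, 0, 1],
   !![1, 0, 0; 0, 1, 0; 0, 0, 0],
   !![1, 0, 0; 0, 1, 0; 0, 0, 1],
   !![1, 1, 1; 1, 1, 1; 1, 1, 1]]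

def L3 : List (Matrix (Fin 3) (Fin 3) (ZMod 3)) :=
  [!![0, 0, 0; 0, 0, 0; 0, 0, 0],
   !![0, 0, 0; 0, 0, 0; 0, 0, 1],
   !![0, 0, 0; 0, 1, 0; 0, 0, 0],
   !![0, 0, 0; 0, 1, 0; 0, 0, 1],
   !![0, 0, 0; 0, 2, 1; 0, 1, 2],
   !![0, 0, 0; 0, 2, 2; 0, 2, 2],
   !![1, 0, 0; 0, 0, 0; 0, 0, 0],
   !![1, 0, 0; 0, 0, 0; 0, 0, 1],
   !![1, 0, 0; 0, 1, 0; 0, 0, 0],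
   !![1, 0, 0; 0, 1, 0; 0, 0, 1],
   !![1, 0, 0; 0, 2, 1; 0, 1, 2],
   !![1, 0, 0; 0, 2, 2; 0, 2, 2],
   !![2, 0, 1; 0, 0, 0; 1, 0, 2],
   !![2, 0, 1; 0, 1, 0; 1, 0, 2],
   !![2, 0, 2; 0, 0, 0; 2, 0, 2],
   !![2, 0, 2; 0, 1, 0; 2, 0, 2],
   !![2, 1, 0; 1, 2, 0; 0, 0, 0],
   !![2, 1, 0; 1, 2, 0; 0, 0, 1],
   !![2, 2, 0; 2, 2, 0; 0, 0, 0],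
   !![2, 2, 0; 2, 2, 0; 0, 0, 1]]

def T3 : List (Matrix (Fin 3) (Fin 3) (ZMod 3)) :=
  [!![1, 0, 0; 0, 0, 0; 0, 0, 0],
   !![1, 0, 0; 0, 0, 0; 0, 0, 1],
   !![1, 0, 0; 0, 1, 0; 0, 0, 0],
   !![1, 0, 0; 0, 1, 0; 0, 0, 1],
   !![1, 0, 0; 0, 2, 1; 0, 1, 2],
   !![1, 0, 0; 0, 2, 2; 0, 2, 2],
   !![2, 0, 2; 0, 0, 0; 2, 0, 2],
   !![2, 0, 2; 0, 1, 0; 2, 0, 2],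
   !![2, 2, 0; 2, 2, 0; 0, 0, 0],
   !![2, 2, 0; 2, 2, 0; 0, 0, 1]]

lemma symm_entries {R : Type*} [CommRing R] (P : Matrix (Fin 3) (Fin 3) R) (h : Pᵀ = P) :
    P = !![P 0 0, P 0 1, P 0 2; P 0 1, P 1 1, P 1 2; P 0 2, P 1 2, P 2 2] := by
  have hsymm : ∀ i j, P j i = P i j := fun i j => by
    have := congrFun (congrFun h i) j
    rwa [Matrix.transpose_apply] at this
  ext i j
  fin_cases i <;> fin_cases j <;>
    simp [Matrix.cons_val_zero, Matrix.cons_val_one, Matrix.head_cons] <;>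
    first
      | rfl
      | exact hsymm _ _

lemma idem_mem_L2 : ∀ a b c d e f : ZMod 2,
    (!![a,b,c;b,d,e;c,e,f] : Matrix (Fin 3) (Fin 3) (ZMod 2)) * !![a,b,c;b,d,e;c,e,f]
      = !![a,b,c;b,d,e;c,e,f] → !![a,b,c;b,d,e;c,e,f] ∈ L2 := by decide

lemma idem_mem_L3 : ∀ a b c d e f : ZMod 3,
    (!![a,b,c;b,d,e;c,e,f] : Matrix (Fin 3) (Fin 3) (ZMod 3)) * !![a,b,c;b,d,e;c,e,f]
      = !![a,b,c;b,d,e;c,e,f] → !![a,b,c;b,d,e;c,e,f] ∈ L3 := by decide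

lemma complete2 : ∀ P : Matrix (Fin 3) (Fin 3) (ZMod 2), Pᵀ = P → P * P = P → P ∈ L2 := by
  intro P h1 h2
  rw [symm_entries P h1] at h2 ⊢
  exact idem_mem_L2 _ _ _ _ _ _ h2

lemma complete3 : ∀ P : Matrix (Fin 3) (Fin 3) (ZMod 3), Pᵀ = P → P * P = P → P ∈ L3 := by
  intro P h1 h2
  rw [symm_entries P h1] at h2 ⊢
  exact idem_mem_L3 _ _ _ _ _ _ h2

lemma pairs2a : ∀ i j : Fin L2.length, (L2.get i) * (L2.get j) = 0 →
    L2.get i ∈ T2 → L2.get j ∈ T2 → False := by decide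

lemma pairs2b : ∀ i j : Fin L2.length, (L2.get i) * (L2.get j) = 0 →
    L2.get i ∉ T2 → L2.get j ∉ T2 → (L2.get i + L2.get j) ∉ T2 := by decide

lemma pairs3a : ∀ i j : Fin L3.length, (L3.get i) * (L3.get j) = 0 →
    L3.get i ∈ T3 → L3.get j ∈ T3 → False := by decide

lemma pairs3b : ∀ i j : Fin L3.length, (L3.get i) * (L3.get j) = 0 →
    L3.get i ∉ T3 → L3.get j ∉ T3 → (L3.get i + L3.get j) ∉ T3 := by decide

lemma one_mem_T2 : (1 : Matrix (Fin 3) (Fin 3) (ZMod 2)) ∈ T2 := by decide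

lemma one_mem_T3 : (1 : Matrix (Fin 3) (Fin 3) (ZMod 3)) ∈ T3 := by decide

def c2 : SymIdem (ZMod 2) → Bool := fun P => decide ((P : Matrix (Fin 3) (Fin 3) (ZMod 2)) ∈ T2)

def c3 : SymIdem (ZMod 3) → Bool := fun P => decide ((P : Matrix (Fin 3) (Fin 3) (ZMod 3)) ∈ T3)

lemma coloring2 : IsSymKSColoring c2 := by
  apply master c2
  · exact decide_eq_true one_mem_T2
  · intro P Q h hP hQ
    obtain ⟨i, hi⟩ := List.mem_iff_get.mp (complete2 _ P.2.1 P.2.2)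
    obtain ⟨j, hj⟩ := List.mem_iff_get.mp (complete2 _ Q.2.1 Q.2.2)
    rw [← hi, ← hj] at h
    exact pairs2a i j h (hi.symm ▸ of_decide_eq_true hP) (hj.symm ▸ of_decide_eq_true hQ)
  · intro P Q h hP hQ h'
    obtain ⟨i, hi⟩ := List.mem_iff_get.mp (complete2 _ P.2.1 P.2.2)
    obtain ⟨j, hj⟩ := List.mem_iff_get.mp (complete2 _ Q.2.1 Q.2.2)
    rw [← hi, ← hj] at h
    apply decide_eq_false
    have := pairs2b i j h (hi.symm ▸ of_decide_eq_false hP) (hj.symm ▸ of_decide_eq_false hQ)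
    rwa [hi, hj] at this

lemma coloring3 : IsSymKSColoring c3 := by
  apply master c3
  · exact decide_eq_true one_mem_T3
  · intro P Q h hP hQ
    obtain ⟨i, hi⟩ := List.mem_iff_get.mp (complete3 _ P.2.1 P.2.2)
    obtain ⟨j, hj⟩ := List.mem_iff_get.mp (complete3 _ Q.2.1 Q.2.2)
    rw [← hi, ← hj] at h
    exact pairs3a i j h (hi.symm ▸ of_decide_eq_true hP) (hj.symm ▸ of_decide_eq_true hQ)
  · intro P Q h hP hQ h'
    obtain ⟨i, hi⟩ := List.mem_iff_get.mp (complete3 _ P.2.1 P.2.2)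
    obtain ⟨j, hj⟩ := List.mem_iff_get.mp (complete3 _ Q.2.1 Q.2.2)
    rw [← hi, ← hj] at h
    apply decide_eq_false
    have := pairs3b i j h (hi.symm ▸ of_decide_eq_false hP) (hj.symm ▸ of_decide_eq_false hQ)
    rwa [hi, hj] at this

end Concrete

/-- For `p = 2` and `p = 3`, there exists a Kochen–Specker coloring of the symmetric
idempotents of `M₃(𝔽_p)`, and the partial ring `M₃(𝔽_p)_sym` has a prime partial ideal. -/
theorem sym_KS_coloring_and_prime_partial_ideal_M3_F2_F3 (p : ℕ) (hp : p = 2 ∨ p = 3) :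
    (∃ c : {P : Matrix (Fin 3) (Fin 3) (ZMod p) // Pᵀ = P ∧ P * P = P} → Bool,
        IsSymKSColoring c) ∧
    (∃ q : Set (Matrix (Fin 3) (Fin 3) (ZMod p)), IsSymPrimePartialIdeal q) := by
  obtain rfl | rfl := hp
  · exact ⟨⟨c2, coloring2⟩, prime_of_coloring c2 coloring2⟩
  · exact ⟨⟨c3, coloring3⟩, prime_of_coloring c3 coloring3⟩
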